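/- For k > g, all effective generators of P_{g,k+1} are strong; consequently P_{g,k+1} has exactly g strong generators. -/

import Mathlib

def IsNumericalSemigroup (Λ : Set ℕ) : Prop :=
  0 ∈ Λ ∧ (∀ a ∈ Λ, ∀ b ∈ Λ, a + b ∈ Λ) ∧ Λᶜ.Finite

noncomputable def sgGenus (Λ : Set ℕ) : ℕ := Λᶜ.ncard

noncomputable def sgFrobenius (Λ : Set ℕ) : ℕ := sSup Λᶜ

noncomputable def sgMultiplicity (Λ : Set ℕ) : ℕ := sInf (Λ \ {0})

def IsMinimalGenerator (Λ : Set ℕ) (μ : ℕ) : Prop :=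
  μ ∈ Λ ∧ μ ≠ 0 ∧ ¬ ∃ a ∈ Λ, ∃ b ∈ Λ, a ≠ 0 ∧ b ≠ 0 ∧ a + b = μ

def IsEffectiveGenerator (Λ : Set ℕ) (μ : ℕ) : Prop :=
  IsMinimalGenerator Λ μ ∧ sgFrobenius Λ < μ

def IsOrdinary (Λ : Set ℕ) : Prop := ∃ m : ℕ, Λ = {0} ∪ {n : ℕ | m ≤ n}

def IsStrongGenerator (Λ : Set ℕ) (μ : ℕ) : Prop :=
  IsEffectiveGenerator Λ μ ∧ IsMinimalGenerator (Λ \ {μ}) (sgMultiplicity Λ + μ)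

def IsChildOf (Λ' Λ : Set ℕ) : Prop :=
  IsNumericalSemigroup Λ' ∧ Λ' ⊂ Λ ∧ Λ' ∪ {sgFrobenius Λ'} = Λ

def sgDescendants (Λ : Set ℕ) : Set (Set ℕ) :=
  {Λ' | Relation.TransGen IsChildOf Λ' Λ}

def dCoef (g i : ℕ) : ℕ := (2*g+i) / (g+1)

def Pgi (g i : ℕ) : Set ℕ :=
  {n : ℕ | (g+1) ∣ n} ∪
  {n : ℕ | g+i ≤ n ∧ n ≤ 2*g+i ∧ n ≠ (dCoef g i) * (g+1)} ∪
  {n : ℕ | 2*g+i+1 ≤ n}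

section Aux

variable {g k : ℕ}

lemma pgiMem (hg : 1 ≤ g) (n : ℕ) :
    n ∈ Pgi g (k+1) ↔ (g+1) ∣ n ∨ g+k+1 ≤ n := by
  simp only [Pgi, Set.mem_union, Set.mem_setOf_eq]
  constructor
  · rintro ((h | ⟨h1, h2, h3⟩) | h)
    · exact Or.inl h
    · right; omega
    · right; omega
  · rintro (h | h)
    · exact Or.inl (Or.inl h)
    · by_cases hd : n = dCoef g (k+1) * (g+1)
      · exact Or.inl (Or.inl (hd ▸ dvd_mul_left _ _))
      · by_cases h2 : n ≤ 2*g+(k+1)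
        · left; right; omega
        · right; omega

lemma dCoefBounds (hg : 1 ≤ g) (hk : g < k) :
    g+k+1 ≤ dCoef g (k+1) * (g+1) ∧ dCoef g (k+1) * (g+1) ≤ 2*g+k+1 := by
  have h1 : dCoef g (k+1) * (g+1) ≤ 2*g+(k+1) := Nat.div_mul_le_self _ _
  have h2 : 2*g+(k+1) < (2*g+(k+1)) / (g+1) * (g+1) + (g+1) :=
    Nat.lt_div_mul_add (by omega)
  have h3 : (2*g+(k+1)) / (g+1) * (g+1) = dCoef g (k+1) * (g+1) := rfl
  omega

lemma pgiUniqueMul (hg : 1 ≤ g) (hk : g < k) {n : ℕ} (hdvd : (g+1) ∣ n)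
    (h1 : g+k+1 ≤ n) (h2 : n ≤ 2*g+k+1) : n = dCoef g (k+1) * (g+1) := by
  obtain ⟨hd1, hd2⟩ := dCoefBounds hg hk
  have hdd : (g+1) ∣ dCoef g (k+1) * (g+1) := dvd_mul_left _ _
  rcases Nat.lt_trichotomy n (dCoef g (k+1) * (g+1)) with h | h | h
  · have hsub : (g+1) ∣ dCoef g (k+1) * (g+1) - n := Nat.dvd_sub hdd hdvd
    have := Nat.le_of_dvd (by omega) hsub
    omega
  · exact h
  · have hsub : (g+1) ∣ n - dCoef g (k+1) * (g+1) := Nat.dvd_sub hdvd hdd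
    have := Nat.le_of_dvd (by omega) hsub
    omega

lemma pgiMult (hg : 1 ≤ g) (hk : g < k) : sgMultiplicity (Pgi g (k+1)) = g+1 := by
  have hmem : g+1 ∈ Pgi g (k+1) \ {0} :=
    ⟨(pgiMem hg _).2 (Or.inl dvd_rfl), by simp⟩
  refine le_antisymm (Nat.sInf_le hmem) (le_csInf ⟨_, hmem⟩ ?_)
  rintro m ⟨hm, hm0⟩
  simp only [Set.mem_singleton_iff] at hm0
  rcases (pgiMem hg m).1 hm with h | h
  · exact Nat.le_of_dvd (by omega) h
  · omega

lemma pgiFrobLe (hg : 1 ≤ g) (hk : g < k) : sgFrobenius (Pgi g (k+1)) ≤ g+k := by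
  apply csSup_le
  · refine ⟨1, fun h => ?_⟩
    rcases (pgiMem hg 1).1 h with h | h
    · have := Nat.le_of_dvd one_pos h; omega
    · omega
  · intro n hn
    by_contra hlt
    exact hn ((pgiMem hg n).2 (Or.inr (by omega)))

lemma pgiFrobGe (hg : 1 ≤ g) (hk : g < k) : g+1 ≤ sgFrobenius (Pgi g (k+1)) := by
  unfold sgFrobenius
  have hbdd : BddAbove (Pgi g (k+1))ᶜ := by
    refine ⟨g+k, fun n hn => ?_⟩
    by_contra hlt
    exact hn ((pgiMem hg n).2 (Or.inr (by omega)))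
  by_cases hdvd : (g+1) ∣ (g+k)
  · have hmem : g+k-1 ∈ (Pgi g (k+1))ᶜ := by
      intro h
      rcases (pgiMem hg _).1 h with h | h
      · have h2 : (g+1) ∣ (g+k) - (g+k-1) := Nat.dvd_sub hdvd h
        have := Nat.le_of_dvd (by omega) h2
        omega
      · omega
    have := le_csSup hbdd hmem
    omega
  · have hmem : g+k ∈ (Pgi g (k+1))ᶜ := by
      intro h
      rcases (pgiMem hg _).1 h with h | h
      · exact hdvd h
      · omega
    have := le_csSup hbdd hmem
    omega

lemma dvdGe (hg : 1 ≤ g) {a : ℕ} (hdvd : (g+1) ∣ a) (h0 : a ≠ 0)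
    (h2 : a < 2*(g+1)) : a = g+1 := by
  have h1 := Nat.le_of_dvd (by omega) hdvd
  rcases Nat.lt_or_ge a (g+1+1) with h | h
  · omega
  · have hsub : (g+1) ∣ a - (g+1) := Nat.dvd_sub hdvd dvd_rfl
    have := Nat.le_of_dvd (by omega) hsub
    omega

lemma pgiEff (hg : 1 ≤ g) (hk : g < k) (μ : ℕ) :
    IsEffectiveGenerator (Pgi g (k+1)) μ ↔
      (g+k+1 ≤ μ ∧ μ ≤ 2*g+k+1 ∧ μ ≠ dCoef g (k+1) * (g+1)) := by
  constructor
  · rintro ⟨⟨hμΛ, hμ0, hmin⟩, hF⟩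
    have hFg := pgiFrobGe hg hk
    rcases (pgiMem hg μ).1 hμΛ with hdvd | hge
    · exfalso
      have hle := Nat.le_of_dvd (by omega) hdvd
      rcases Nat.lt_or_ge μ (2*(g+1)) with h | h
      · have := dvdGe hg hdvd hμ0 h
        omega
      · apply hmin
        refine ⟨g+1, (pgiMem hg _).2 (Or.inl dvd_rfl), μ - (g+1),
          (pgiMem hg _).2 (Or.inl (Nat.dvd_sub hdvd dvd_rfl)), by omega, by omega, by omega⟩
    · refine ⟨hge, ?_, ?_⟩
      · by_contra h
        apply hmin
        refine ⟨g+1, (pgiMem hg _).2 (Or.inl dvd_rfl), μ - (g+1),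
          (pgiMem hg _).2 (Or.inr (by omega)), by omega, by omega, by omega⟩
      · intro h
        obtain ⟨hd1, hd2⟩ := dCoefBounds hg hk
        apply hmin
        have hdvd : (g+1) ∣ μ := h ▸ dvd_mul_left _ _
        refine ⟨g+1, (pgiMem hg _).2 (Or.inl dvd_rfl), μ - (g+1),
          (pgiMem hg _).2 (Or.inl (Nat.dvd_sub hdvd dvd_rfl)), by omega, by omega, by omega⟩
  · rintro ⟨h1, h2, h3⟩
    refine ⟨⟨(pgiMem hg μ).2 (Or.inr h1), by omega, ?_⟩, ?_⟩
    · rintro ⟨a, ha, b, hb, ha0, hb0, hab⟩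
      rcases (pgiMem hg a).1 ha with hda | hga <;>
        rcases (pgiMem hg b).1 hb with hdb | hgb
      · exact h3 (pgiUniqueMul hg hk (hab ▸ Nat.dvd_add hda hdb) h1 h2)
      · have := Nat.le_of_dvd (by omega) hda; omega
      · have := Nat.le_of_dvd (by omega) hdb; omega
      · omega
    · have := pgiFrobLe hg hk; omega

lemma pgiStrong (hg : 1 ≤ g) (hk : g < k) (μ : ℕ)
    (hμ : IsEffectiveGenerator (Pgi g (k+1)) μ) : IsStrongGenerator (Pgi g (k+1)) μ := by
  obtain ⟨h1, h2, h3⟩ := (pgiEff hg hk μ).1 hμ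
  refine ⟨hμ, ?_⟩
  rw [pgiMult hg hk]
  refine ⟨⟨(pgiMem hg _).2 (Or.inr (by omega)), by simp⟩, by omega, ?_⟩
  rintro ⟨a, ⟨haΛ, haμ⟩, b, ⟨hbΛ, hbμ⟩, ha0, hb0, hab⟩
  simp only [Set.mem_singleton_iff] at haμ hbμ
  rcases (pgiMem hg a).1 haΛ with hda | hga <;>
    rcases (pgiMem hg b).1 hbΛ with hdb | hgb
  · have hdμ : (g+1) ∣ μ := by
      have : (g+1) ∣ (g+1) + μ := by rw [← hab]; exact Nat.dvd_add hda hdb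
      exact (Nat.dvd_add_right dvd_rfl).mp this
    exact (h3 (pgiUniqueMul hg hk hdμ h1 h2)).elim
  · have ha : a = g+1 := dvdGe hg hda ha0 (by omega)
    exact hbμ (by omega)
  · have hb : b = g+1 := dvdGe hg hdb hb0 (by omega)
    exact haμ (by omega)
  · omega

end Aux

theorem stmt13 (g k : ℕ) (hg : 1 ≤ g) (hk : g < k) :
    (∀ μ : ℕ, IsEffectiveGenerator (Pgi g (k+1)) μ → IsStrongGenerator (Pgi g (k+1)) μ) ∧
    {μ : ℕ | IsStrongGenerator (Pgi g (k+1)) μ}.ncard = g := by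
  refine ⟨pgiStrong hg hk, ?_⟩
  obtain ⟨hd1, hd2⟩ := dCoefBounds hg hk
  have hset : {μ : ℕ | IsStrongGenerator (Pgi g (k+1)) μ}
      = Set.Icc (g+k+1) (2*g+k+1) \ {dCoef g (k+1) * (g+1)} := by
    ext μ
    simp only [Set.mem_setOf_eq, Set.mem_diff, Set.mem_Icc, Set.mem_singleton_iff]
    constructor
    · intro h
      have := (pgiEff hg hk μ).1 h.1
      exact ⟨⟨this.1, this.2.1⟩, this.2.2⟩
    · rintro ⟨⟨ha, hb⟩, hc⟩
      exact pgiStrong hg hk μ ((pgiEff hg hk μ).2 ⟨ha, hb, hc⟩)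
  rw [hset, Set.ncard_diff_singleton_of_mem (by simp [Set.mem_Icc]; omega)]
  rw [← Finset.coe_Icc, Set.ncard_coe_finset, Nat.card_Icc]
  omega
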